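/- arXiv:2012.02887 — 2 statements merged into one kernel-verified Lean document; each statement's English description precedes it below -/
import Mathlib

section
/- For Re(ν) > -1/2 and μ ∈ ℂ, ∫_{-π}^{π} e^{-iμπ·sgn(θ)} (1 − cos θ)^{ν} e^{iμθ} dθ = 2^{ν+2} ∫_0^{π/2} (cos θ)^{2ν} cos(2μθ) dθ. -/
open Complex Real MeasureTheory

private lemma two_cos' (z : ℂ) :
    Complex.exp (z * Complex.I) + Complex.exp (-z * Complex.I) = 2 * Complex.cos z := by
  rw [Complex.exp_mul_I, Complex.exp_mul_I, Complex.cos_neg, Complex.sin_neg]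
  ring

private lemma exp_pair (w z : ℂ) :
    Complex.exp (Complex.I * w * (π : ℂ)) * Complex.exp (-(Complex.I * w * z)) +
      Complex.exp (-(Complex.I * w * (π : ℂ))) * Complex.exp (Complex.I * w * z) =
      2 * Complex.cos (w * ((π : ℂ) - z)) := by
  have e1 : Complex.I * w * (π : ℂ) + -(Complex.I * w * z) = (w * ((π : ℂ) - z)) * Complex.I := by
    ring
  have e2 : -(Complex.I * w * (π : ℂ)) + Complex.I * w * z = -(w * ((π : ℂ) - z)) * Complex.I := by
    ring
  rw [← Complex.exp_add, ← Complex.exp_add, e1, e2, two_cos']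

private lemma intInt_g (ν : ℂ) (hν : (-1/2 : ℝ) < ν.re) :
    IntervalIntegrable (fun θ : ℝ => ((1 - Real.cos θ : ℝ) : ℂ) ^ ν) volume 0 π := by
  have hπ := Real.pi_pos
  have hIoc : Set.uIoc (0:ℝ) π = Set.Ioc 0 π := Set.uIoc_of_le hπ.le
  have hlb : ∀ θ ∈ Set.Ioc (0:ℝ) π, 2/π^2 * θ^2 ≤ 1 - Real.cos θ := by
    intro θ hθ
    have hb := Real.cos_le_one_sub_mul_cos_sq (x := θ) (by rw [abs_of_pos hθ.1]; exact hθ.2)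
    linarith
  have hpos : ∀ θ ∈ Set.Ioc (0:ℝ) π, 0 < 1 - Real.cos θ := by
    intro θ hθ
    have h1 : 0 < 2/π^2 * θ^2 := mul_pos (by positivity) (pow_pos hθ.1 2)
    linarith [hlb θ hθ]
  have hmeas : AEStronglyMeasurable (fun θ : ℝ => ((1 - Real.cos θ : ℝ) : ℂ) ^ ν)
      (volume.restrict (Set.uIoc 0 π)) := by
    rw [hIoc]
    refine ContinuousOn.aestronglyMeasurable ?_ measurableSet_Ioc
    intro θ hθ
    have hbase : Continuous fun θ : ℝ => 1 - Real.cos θ := by fun_prop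
    have h1 : ContinuousAt ((fun x : ℝ => (x : ℂ) ^ ν) ∘ fun θ : ℝ => 1 - Real.cos θ) θ :=
      ContinuousAt.comp
        (Complex.continuousAt_ofReal_cpow_const _ _ (Or.inr (hpos θ hθ).ne'))
        hbase.continuousAt
    exact h1.continuousWithinAt
  rcases le_or_gt 0 ν.re with hre | hre
  · refine IntervalIntegrable.mono_fun' (g := fun _ => (2:ℝ) ^ ν.re)
      intervalIntegrable_const hmeas ?_
    rw [hIoc]
    refine (ae_restrict_iff' measurableSet_Ioc).mpr (Filter.Eventually.of_forall fun θ hθ => ?_)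
    have h1 := hpos θ hθ
    have h2 : 1 - Real.cos θ ≤ 2 := by linarith [Real.neg_one_le_cos θ]
    simp only [Complex.norm_cpow_eq_rpow_re_of_pos h1]
    exact Real.rpow_le_rpow h1.le h2 hre
  · refine IntervalIntegrable.mono_fun'
      ((intervalIntegral.intervalIntegrable_rpow' (by linarith : (-1:ℝ) < 2 * ν.re)).const_mul
        ((2/π^2) ^ ν.re)) hmeas ?_
    rw [hIoc]
    refine (ae_restrict_iff' measurableSet_Ioc).mpr (Filter.Eventually.of_forall fun θ hθ => ?_)
    have hq : 0 < 2/π^2 * θ^2 := mul_pos (by positivity) (pow_pos hθ.1 2)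
    have hle := hlb θ hθ
    simp only [Complex.norm_cpow_eq_rpow_re_of_pos (hpos θ hθ)]
    calc (1 - Real.cos θ) ^ ν.re ≤ (2/π^2 * θ^2) ^ ν.re :=
          Real.rpow_le_rpow_of_nonpos hq hle hre.le
      _ = (2/π^2) ^ ν.re * θ ^ (2 * ν.re) := by
          rw [Real.mul_rpow (by positivity) (sq_nonneg θ),
            show (θ:ℝ)^2 = θ ^ ((2:ℕ):ℝ) from (Real.rpow_natCast θ 2).symm,
            ← Real.rpow_mul hθ.1.le]
          norm_num

private lemma intInt_g_neg (ν : ℂ) (hν : (-1/2 : ℝ) < ν.re) :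
    IntervalIntegrable (fun θ : ℝ => ((1 - Real.cos θ : ℝ) : ℂ) ^ ν) volume (-π) 0 := by
  refine (IntervalIntegrable.iff_comp_neg (f := fun θ : ℝ => ((1 - Real.cos θ : ℝ) : ℂ) ^ ν) (a := -π) (b := 0)).mpr ?_
  simpa [Real.cos_neg] using (intInt_g ν hν).symm

private lemma intInt_full (ν : ℂ) (hν : (-1/2 : ℝ) < ν.re) (c d : ℂ) :
    IntervalIntegrable
      (fun θ : ℝ => c * ((1 - Real.cos θ : ℝ) : ℂ) ^ ν * Complex.exp (d * θ)) volume 0 π := by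
  have h1 : Continuous fun θ : ℝ => Complex.exp (d * θ) := by fun_prop
  have := ((intInt_g ν hν).mul_continuousOn h1.continuousOn).const_mul c
  simpa only [mul_assoc] using this

theorem integral_sign_eq_cos_integral (ν μ : ℂ) (hν : (-1/2 : ℝ) < ν.re) :
    ∫ θ in (-π)..π,
        Complex.exp (-Complex.I * μ * (π : ℂ) * (Real.sign θ : ℂ)) *
          ((1 : ℂ) - Real.cos θ) ^ ν * Complex.exp (Complex.I * μ * (θ : ℂ)) =
      (2 : ℂ) ^ (ν + 2) *
        ∫ θ in (0:ℝ)..(π/2), ((Real.cos θ : ℂ)) ^ (2 * ν) * Complex.cos (2 * μ * (θ : ℂ)) := by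
  have hπ := Real.pi_pos
  set F : ℝ → ℂ := fun θ =>
    Complex.exp (-Complex.I * μ * (π : ℂ) * (Real.sign θ : ℂ)) *
      ((1 : ℂ) - Real.cos θ) ^ ν * Complex.exp (Complex.I * μ * (θ : ℂ)) with hF
  set g : ℝ → ℂ := fun θ => ((1 - Real.cos θ : ℝ) : ℂ) ^ ν with hg
  -- the two half integrands with constant sign
  set Ga : ℝ → ℂ := fun θ =>
    Complex.exp (Complex.I * μ * (π : ℂ)) * g θ * Complex.exp (-(Complex.I * μ) * θ) with hGa
  set Bb : ℝ → ℂ := fun θ =>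
    Complex.exp (-(Complex.I * μ * (π : ℂ))) * g θ * Complex.exp ((Complex.I * μ) * θ) with hBb
  have hGaInt : IntervalIntegrable Ga volume 0 π := intInt_full ν hν _ _
  have hBbInt : IntervalIntegrable Bb volume 0 π := intInt_full ν hν _ _
  have h0ne : ∀ᵐ x : ℝ ∂volume, x ≠ 0 := by
    simp [ae_iff]
  -- F is integrable on the two halves
  have hF2 : IntervalIntegrable F volume 0 π := by
    refine hBbInt.congr_ae ?_
    rw [Set.uIoc_of_le hπ.le]
    refine (ae_restrict_iff' measurableSet_Ioc).mpr (Filter.Eventually.of_forall fun θ hθ => ?_)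
    simp only [hBb, hF, hg, Real.sign_of_pos hθ.1]
    push_cast
    ring_nf
  have hF1 : IntervalIntegrable F volume (-π) 0 := by
    have hGInt : IntervalIntegrable
        (fun θ : ℝ => Complex.exp (Complex.I * μ * (π : ℂ)) * g θ *
          Complex.exp ((Complex.I * μ) * θ)) volume (-π) 0 := by
      have h1 : Continuous fun θ : ℝ => Complex.exp ((Complex.I * μ) * θ) := by fun_prop
      have := ((intInt_g_neg ν hν).mul_continuousOn h1.continuousOn).const_mul
        (Complex.exp (Complex.I * μ * (π : ℂ)))
      simpa only [mul_assoc] using this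
    refine hGInt.congr_ae ?_
    refine ((ae_restrict_of_ae h0ne).and
      ((ae_restrict_iff' measurableSet_uIoc).mpr (Filter.Eventually.of_forall fun θ hθ => hθ))).mono
      ?_
    rintro θ ⟨hθ0, hθmem⟩
    rw [Set.uIoc_of_le (neg_nonpos.mpr hπ.le)] at hθmem
    have hneg : θ < 0 := lt_of_le_of_ne hθmem.2 hθ0
    simp only [hF, hg, Real.sign_of_neg hneg]
    push_cast
    ring_nf
  -- split
  have hsplit : (∫ θ in (-π)..π, F θ) = (∫ θ in (-π)..0, F θ) + ∫ θ in (0:ℝ)..π, F θ :=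
    (intervalIntegral.integral_add_adjacent_intervals hF1 hF2).symm
  -- left half: replace sign by -1 and substitute θ ↦ -θ
  have hA : (∫ θ in (-π)..0, F θ) = ∫ θ in (0:ℝ)..π, Ga θ := by
    have h1 : (∫ θ in (-π)..0, F θ) =
        ∫ θ in (-π)..0, Complex.exp (Complex.I * μ * (π : ℂ)) * g θ *
          Complex.exp ((Complex.I * μ) * θ) := by
      refine intervalIntegral.integral_congr_ae ?_
      filter_upwards [h0ne] with θ hθ0 hθmem
      rw [Set.uIoc_of_le (neg_nonpos.mpr hπ.le)] at hθmem
      have hneg : θ < 0 := lt_of_le_of_ne hθmem.2 hθ0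
      simp only [hF, hg, Real.sign_of_neg hneg]
      push_cast
      ring_nf
    have h2 := intervalIntegral.integral_comp_neg (a := 0) (b := π)
      (fun θ : ℝ => Complex.exp (Complex.I * μ * (π : ℂ)) * g θ *
        Complex.exp ((Complex.I * μ) * θ))
    rw [neg_zero] at h2
    rw [h1, ← h2]
    refine intervalIntegral.integral_congr fun θ _ => ?_
    simp only [hGa, hg, Real.cos_neg, Complex.ofReal_neg]
    ring_nf
  -- right half: replace sign by 1
  have hB : (∫ θ in (0:ℝ)..π, F θ) = ∫ θ in (0:ℝ)..π, Bb θ := by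
    refine intervalIntegral.integral_congr_ae (Filter.Eventually.of_forall fun θ hθ => ?_)
    rw [Set.uIoc_of_le hπ.le] at hθ
    simp only [hF, hBb, hg, Real.sign_of_pos hθ.1]
    push_cast
    ring_nf
  -- combine the two halves
  have hcomb : (∫ θ in (0:ℝ)..π, Ga θ) + (∫ θ in (0:ℝ)..π, Bb θ) =
      ∫ θ in (0:ℝ)..π, g θ * (2 * Complex.cos (μ * ((π : ℂ) - θ))) := by
    rw [← intervalIntegral.integral_add hGaInt hBbInt]
    refine intervalIntegral.integral_congr fun θ _ => ?_
    simp only [hGa, hBb, hg]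
    rw [← exp_pair μ θ]
    ring
  -- substitute θ ↦ π - θ
  set H : ℝ → ℂ := fun φ => ((1 + Real.cos φ : ℝ) : ℂ) ^ ν * (2 * Complex.cos (μ * φ)) with hH
  have hsub : (∫ θ in (0:ℝ)..π, g θ * (2 * Complex.cos (μ * ((π : ℂ) - θ)))) =
      ∫ φ in (0:ℝ)..π, H φ := by
    have h3 := intervalIntegral.integral_comp_sub_left (a := 0) (b := π) H π
    rw [sub_self, sub_zero] at h3
    rw [← h3]
    refine intervalIntegral.integral_congr fun θ _ => ?_
    simp only [hH, hg, Real.cos_pi_sub, Complex.ofReal_sub, ← sub_eq_add_neg]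
  -- half-angle rewrite
  set L : ℝ → ℂ := fun u =>
    (2:ℂ) ^ (ν + 1) * (((Real.cos u : ℝ)) : ℂ) ^ (2 * ν) * Complex.cos (2 * μ * u) with hL
  have hhalf : (∫ φ in (0:ℝ)..π, H φ) = ∫ φ in (0:ℝ)..π, L (φ / 2) := by
    refine intervalIntegral.integral_congr fun φ hφ => ?_
    rw [Set.uIcc_of_le hπ.le] at hφ
    have hc : 0 ≤ Real.cos (φ/2) :=
      Real.cos_nonneg_of_mem_Icc ⟨by linarith [hφ.1], by linarith [hφ.2]⟩
    have hsq : (1 + Real.cos φ) = 2 * Real.cos (φ/2) ^ 2 := by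
      have h := Real.cos_sq (φ/2)
      rw [show (2:ℝ) * (φ/2) = φ by ring] at h
      linarith
    have h1 : ((Real.cos (φ/2) : ℝ) : ℂ) ^ (2 * ν) = ((Real.cos (φ/2) ^ 2 : ℝ) : ℂ) ^ ν := by
      rw [show (2:ℂ) = ((2:ℝ):ℂ) by norm_num, Complex.cpow_mul_ofReal_nonneg hc,
        show ((2:ℝ)) = ((2:ℕ):ℝ) by norm_num, Real.rpow_natCast]
    have h2 : ((1 + Real.cos φ : ℝ) : ℂ) ^ ν =
        (2:ℂ) ^ ν * ((Real.cos (φ/2) ^ 2 : ℝ) : ℂ) ^ ν := by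
      have h := Complex.mul_cpow_ofReal_nonneg (by norm_num : (0:ℝ) ≤ 2)
        (sq_nonneg (Real.cos (φ/2))) ν
      rw [hsq, Complex.ofReal_mul]
      simpa using h
    have h3 : 2 * μ * ((φ/2 : ℝ) : ℂ) = μ * φ := by
      push_cast
      ring
    simp only [hH, hL, h1, h2, h3, Complex.cpow_add _ _ (two_ne_zero' ℂ), Complex.cpow_one]
    ring
  -- substitute φ = 2u
  have hdiv : (∫ φ in (0:ℝ)..π, L (φ / 2)) = (2:ℂ) * ∫ u in (0:ℝ)..(π/2), L u := by
    have h := intervalIntegral.integral_comp_div (a := 0) (b := π) (c := 2) (f := L)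
      (by norm_num)
    rw [zero_div] at h
    rw [h, Complex.real_smul]
    norm_num
  have hfinal : (2:ℂ) * ∫ u in (0:ℝ)..(π/2), L u =
      (2 : ℂ) ^ (ν + 2) *
        ∫ θ in (0:ℝ)..(π/2), ((Real.cos θ : ℂ)) ^ (2 * ν) * Complex.cos (2 * μ * (θ : ℂ)) := by
    have : (∫ u in (0:ℝ)..(π/2), L u) = (2:ℂ) ^ (ν + 1) *
        ∫ θ in (0:ℝ)..(π/2), ((Real.cos θ : ℂ)) ^ (2 * ν) * Complex.cos (2 * μ * (θ : ℂ)) := by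
      rw [← intervalIntegral.integral_const_mul]
      refine intervalIntegral.integral_congr fun u _ => ?_
      simp only [hL]
      ring
    rw [this, ← mul_assoc]
    congr 1
    conv_rhs => rw [show ν + 2 = (ν + 1) + 1 by ring,
      Complex.cpow_add _ _ (two_ne_zero' ℂ), Complex.cpow_one]
    exact mul_comm _ _
  calc ∫ θ in (-π)..π, F θ
      = (∫ θ in (-π)..0, F θ) + ∫ θ in (0:ℝ)..π, F θ := hsplit
    _ = (∫ θ in (0:ℝ)..π, Ga θ) + ∫ θ in (0:ℝ)..π, Bb θ := by rw [hA, hB]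
    _ = ∫ θ in (0:ℝ)..π, g θ * (2 * Complex.cos (μ * ((π : ℂ) - θ))) := hcomb
    _ = ∫ φ in (0:ℝ)..π, H φ := hsub
    _ = ∫ φ in (0:ℝ)..π, L (φ / 2) := hhalf
    _ = (2:ℂ) * ∫ u in (0:ℝ)..(π/2), L u := hdiv
    _ = _ := hfinal
end

section
/- For μ ∈ ℂ, z ∈ ℂ (z off the negative real axis if μ ∉ ℤ), the Bessel function of the first kind satisfies J_μ(z) = (1/(2π)) · (z/2)^μ / Γ(1+μ) · ∫_{-π}^{π} exp((iz/2) e^{−iθ}) · M(1, 1+μ; (iz/2) e^{iθ}) dθ, where M(1, 1+μ; w) = Σ_{k=0}^∞ w^k · Γ(1+μ)/Γ(1+μ+k) is the Kummer confluent hypergeometric function (for μ with Γ(1+μ) ≠ 0; equivalently state using γ*(μ,w) = e^{−w} M(1,1+μ;w)/Γ(1+μ)). -/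
open Complex Real MeasureTheory

/-- The Bessel function of the first kind, defined by its power series
(principal branch of `(z/2)^μ`). -/
noncomputable def besselJ (μ z : ℂ) : ℂ :=
  ∑' k : ℕ, (-1) ^ k * (z / 2) ^ (2 * (k : ℂ) + μ) /
    ((k.factorial : ℂ) * Complex.Gamma (μ + k + 1))

/-- The Kummer confluent hypergeometric function `M(1, b; w) = Σ_{k≥0} w^k Γ(b)/Γ(b+k)`. -/
noncomputable def kummerM1 (b w : ℂ) : ℂ :=
  ∑' k : ℕ, w ^ k * Complex.Gamma b / Complex.Gamma (b + k)

open Filter Topology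

private lemma cexp_eq_tsum (w : ℂ) :
    Complex.exp w = ∑' n : ℕ, w ^ n / (n.factorial : ℂ) := by
  rw [Complex.exp_eq_exp_ℂ, NormedSpace.exp_eq_tsum_div]

private lemma summable_exp_norm (w : ℂ) :
    Summable fun m : ℕ => ‖w ^ m / (m.factorial : ℂ)‖ := by
  have := Real.summable_pow_div_factorial ‖w‖
  refine this.congr fun m => ?_
  rw [norm_div, norm_pow]
  norm_num [Nat.factorial_ne_zero]

private lemma summable_kummer_norm {b w : ℂ}
    (hΓ : ∀ n : ℕ, Complex.Gamma (b + n) ≠ 0)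
    (hb0 : ∀ n : ℕ, b + (n : ℂ) ≠ 0) (hw : w ≠ 0) :
    Summable fun n : ℕ => ‖w ^ n * Complex.Gamma b / Complex.Gamma (b + n)‖ := by
  have hΓb : Complex.Gamma b ≠ 0 := by simpa using hΓ 0
  set f : ℕ → ℂ := fun n => w ^ n * Complex.Gamma b / Complex.Gamma (b + n) with hf
  have hfne : ∀ n, f n ≠ 0 := fun n =>
    div_ne_zero (mul_ne_zero (pow_ne_zero _ hw) hΓb) (hΓ n)
  have hsucc : ∀ n : ℕ, ‖f (n + 1)‖ = ‖w‖ / ‖b + (n : ℂ)‖ * ‖f n‖ := by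
    intro n
    have hGa : Complex.Gamma (b + ((n : ℕ) + 1 : ℕ)) = (b + n) * Complex.Gamma (b + n) := by
      have : (b + ((n : ℕ) + 1 : ℕ) : ℂ) = (b + n) + 1 := by push_cast; ring
      rw [this, Complex.Gamma_add_one _ (hb0 n)]
    have : f (n + 1) = w / (b + n) * f n := by
      rw [hf]
      simp only
      rw [hGa]
      field_simp
      ring
    rw [this, norm_mul, norm_div]
  apply summable_of_ratio_test_tendsto_lt_one (l := 0) one_pos
    (Eventually.of_forall fun n => norm_ne_zero_iff.mpr (hfne n))
  have hT : Tendsto (fun n : ℕ => ‖b + (n : ℂ)‖) atTop atTop := by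
    apply tendsto_atTop_mono (fun n => ?_)
      (tendsto_atTop_add_const_left atTop b.re tendsto_natCast_atTop_atTop)
    calc b.re + (n : ℝ) = (b + (n : ℂ)).re := by simp
      _ ≤ ‖b + (n : ℂ)‖ := Complex.re_le_norm _
  have hT0 : Tendsto (fun n : ℕ => ‖w‖ / ‖b + (n : ℂ)‖) atTop (𝓝 0) :=
    tendsto_const_nhds.div_atTop hT
  refine hT0.congr fun n => ?_
  rw [Real.norm_of_nonneg (norm_nonneg _), Real.norm_of_nonneg (norm_nonneg _), hsucc n,
    mul_div_assoc, div_self (norm_ne_zero_iff.mpr (hfne n)), mul_one]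

private lemma integral_exp_I_int (d : ℤ) :
    ∫ θ in Set.Ioc (-π) π, Complex.exp (Complex.I * (d : ℂ) * (θ : ℝ)) =
      if d = 0 then (2 * π : ℂ) else 0 := by
  have hle : (-π : ℝ) ≤ π := by linarith [Real.pi_pos]
  rw [← intervalIntegral.integral_of_le hle]
  split_ifs with hd
  · subst hd
    simp only [Int.cast_zero, mul_zero, zero_mul, Complex.exp_zero]
    rw [intervalIntegral.integral_const, sub_neg_eq_add, Complex.real_smul]
    push_cast
    ring
  · have hc : Complex.I * (d : ℂ) ≠ 0 :=
      mul_ne_zero Complex.I_ne_zero (by exact_mod_cast hd)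
    rw [integral_exp_mul_complex hc]
    have h1 : Complex.exp (Complex.I * (d : ℂ) * ((π : ℝ) : ℂ)) = (-1 : ℂ) ^ d := by
      rw [show Complex.I * (d : ℂ) * ((π : ℝ) : ℂ) = (d : ℂ) * ((π : ℂ) * Complex.I) by
        push_cast; ring]
      rw [Complex.exp_int_mul, Complex.exp_pi_mul_I]
    have h2 : Complex.exp (Complex.I * (d : ℂ) * ((-π : ℝ) : ℂ)) = (-1 : ℂ) ^ d := by
      rw [show Complex.I * (d : ℂ) * ((-π : ℝ) : ℂ) = (-d : ℂ) * ((π : ℂ) * Complex.I) by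
        push_cast; ring]
      rw [show ((-d : ℂ)) = ((-d : ℤ) : ℂ) by push_cast; ring]
      rw [Complex.exp_int_mul, Complex.exp_pi_mul_I, zpow_neg, ← inv_zpow]
      norm_num
    rw [h1, h2, sub_self, zero_div]

private lemma final_alg (c g f X Y W : ℂ) (hc : c ≠ 0) (hg : g ≠ 0) :
    X * (Y * W) / f = 1 / c * (W / g) * (X * Y * g / f * c) := by
  rcases eq_or_ne f 0 with rfl | hf
  · simp
  · field_simp

private noncomputable def Fterm (a b : ℂ) (p : ℕ × ℕ) (θ : ℝ) : ℂ :=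
  (a * Complex.exp (-Complex.I * θ)) ^ p.1 / (p.1.factorial : ℂ) *
    ((a * Complex.exp (Complex.I * θ)) ^ p.2 * Complex.Gamma b / Complex.Gamma (b + p.2))

private lemma Fterm_eq (a b : ℂ) (p : ℕ × ℕ) (θ : ℝ) :
    Fterm a b p θ =
      a ^ (p.1 + p.2) * Complex.Gamma b / ((p.1.factorial : ℂ) * Complex.Gamma (b + p.2)) *
        Complex.exp (Complex.I * (((p.2 : ℤ) - (p.1 : ℤ) : ℤ) : ℂ) * (θ : ℝ)) := by
  rw [Fterm, mul_pow, mul_pow, ← Complex.exp_nat_mul, ← Complex.exp_nat_mul, pow_add]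
  rw [show Complex.I * (((p.2 : ℤ) - (p.1 : ℤ) : ℤ) : ℂ) * (θ : ℝ)
      = (p.1 : ℂ) * (-Complex.I * θ) + (p.2 : ℂ) * (Complex.I * θ) by push_cast; ring]
  rw [Complex.exp_add]
  ring

theorem besselJ_integral_rep_kummer (μ z : ℂ)
    (hμ : ∀ n : ℕ, 1 + μ ≠ -(n : ℂ))
    (hz : (∀ n : ℤ, μ ≠ (n : ℂ)) → z.im ≠ 0 ∨ 0 ≤ z.re) :
    besselJ μ z =
      (1 / (2 * (π : ℂ))) * ((z / 2) ^ μ / Complex.Gamma (1 + μ)) *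
        ∫ θ in (-π)..π,
          Complex.exp (Complex.I * z / 2 * Complex.exp (-Complex.I * (θ : ℂ))) *
            kummerM1 (1 + μ) (Complex.I * z / 2 * Complex.exp (Complex.I * (θ : ℂ))) := by
  clear hz
  have hΓargs : ∀ k m : ℕ, (1 + μ + (k : ℂ)) ≠ -(m : ℂ) := by
    intro k m h
    apply hμ (m + k)
    push_cast
    linear_combination h
  have hΓ : ∀ k : ℕ, Complex.Gamma (1 + μ + (k : ℂ)) ≠ 0 :=
    fun k => Complex.Gamma_ne_zero (hΓargs k)
  have hΓb : Complex.Gamma (1 + μ) ≠ 0 := by simpa using hΓ 0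
  have hb0 : ∀ k : ℕ, (1 + μ + (k : ℂ)) ≠ 0 := by
    intro k h
    exact hΓargs k 0 (by simpa using h)
  have hπC : (π : ℂ) ≠ 0 := by exact_mod_cast Real.pi_ne_zero
  have hle : (-π : ℝ) ≤ π := by linarith [Real.pi_pos]
  by_cases hz0 : z = 0
  · subst hz0
    have hint : ∀ θ ∈ Set.uIcc (-π : ℝ) π,
        Complex.exp (Complex.I * 0 / 2 * Complex.exp (-Complex.I * (θ : ℂ))) *
          kummerM1 (1 + μ) (Complex.I * 0 / 2 * Complex.exp (Complex.I * (θ : ℂ)))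
          = (1 : ℂ) := by
      intro θ _
      have h0 : (Complex.I * 0 / 2 : ℂ) = 0 := by ring
      rw [h0, zero_mul, zero_mul, Complex.exp_zero, one_mul, kummerM1]
      rw [tsum_eq_single 0 (fun k hk => by simp [zero_pow hk])]
      simp [hΓb]
    rw [intervalIntegral.integral_congr hint, intervalIntegral.integral_const,
      sub_neg_eq_add, Complex.real_smul]
    rw [besselJ]
    by_cases hμ0 : μ = 0
    · subst hμ0
      rw [tsum_eq_single 0 ?side]
      case side =>
        intro k hk
        have : (2 * (k : ℂ) + 0) ≠ 0 := by
          simp only [add_zero]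
          intro h
          exact hk (by exact_mod_cast (by simpa using h : (k : ℂ) = 0))
        rw [show (0 / 2 : ℂ) = 0 by norm_num, Complex.zero_cpow this]
        simp
      simp only [Nat.cast_zero, mul_zero, zero_add, add_zero, Complex.cpow_zero,
        Nat.factorial_zero, Nat.cast_one, pow_zero, Complex.Gamma_one]
      field_simp
      ring
      norm_cast
    · have hterm0 : ∀ k : ℕ, (-1 : ℂ) ^ k * (0 / 2 : ℂ) ^ (2 * (k : ℂ) + μ) /
          ((k.factorial : ℂ) * Complex.Gamma (μ + k + 1)) = 0 := by
        intro k
        have hne : (2 * (k : ℂ) + μ) ≠ 0 := by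
          intro h
          rcases Nat.eq_zero_or_pos k with hk | hk
          · subst hk
            exact hμ0 (by simpa using h)
          · apply hΓargs 0 (2 * k - 1)
            have hcast : ((2 * k - 1 : ℕ) : ℂ) = 2 * (k : ℂ) - 1 := by
              push_cast [Nat.cast_sub (by omega : 1 ≤ 2 * k)]
              ring
            rw [hcast]
            push_cast
            linear_combination h
        rw [show (0 / 2 : ℂ) = 0 by norm_num, Complex.zero_cpow hne]
        simp
      rw [tsum_congr hterm0, tsum_zero, show (0 / 2 : ℂ) = 0 by norm_num,
        Complex.zero_cpow hμ0]
      simp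
  · -- main case
    set a : ℂ := Complex.I * z / 2 with ha_def
    have ha : a ≠ 0 := by
      rw [ha_def]
      exact div_ne_zero (mul_ne_zero Complex.I_ne_zero hz0) two_ne_zero
    set b : ℂ := 1 + μ with hb_def
    -- pointwise expansion
    have hpt : ∀ θ : ℝ,
        Complex.exp (a * Complex.exp (-Complex.I * (θ : ℂ))) *
          kummerM1 b (a * Complex.exp (Complex.I * (θ : ℂ)))
          = ∑' p : ℕ × ℕ, Fterm a b p θ := by
      intro θ
      rw [cexp_eq_tsum, kummerM1]
      exact tsum_mul_tsum_of_summable_norm (summable_exp_norm _)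
        (summable_kummer_norm hΓ hb0 (mul_ne_zero ha (Complex.exp_ne_zero _)))
    have hnorm : ∀ (p : ℕ × ℕ) (θ : ℝ), ‖Fterm a b p θ‖ =
        ‖a‖ ^ p.1 / p.1.factorial *
          (‖a‖ ^ p.2 * ‖Complex.Gamma b‖ / ‖Complex.Gamma (b + p.2)‖) := by
      intro p θ
      have h1 : ‖Complex.exp (-Complex.I * (θ : ℂ))‖ = 1 := by
        rw [Complex.norm_exp]
        norm_num
      have h2 : ‖Complex.exp (Complex.I * (θ : ℂ))‖ = 1 := by
        rw [Complex.norm_exp]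
        norm_num
      simp only [Fterm, norm_mul, norm_div, norm_pow, h1, h2, mul_one,
        Complex.norm_natCast]
    have hcont : ∀ p : ℕ × ℕ, Continuous (Fterm a b p) := by
      intro p
      apply Continuous.mul
      · apply Continuous.div_const
        apply Continuous.pow
        exact continuous_const.mul (Complex.continuous_exp.comp
          (continuous_const.mul Complex.continuous_ofReal))
      · apply Continuous.div_const
        apply Continuous.mul ?_ continuous_const
        apply Continuous.pow
        exact continuous_const.mul (Complex.continuous_exp.comp
          (continuous_const.mul Complex.continuous_ofReal))
    have hintg : ∀ p : ℕ × ℕ, IntegrableOn (Fterm a b p) (Set.Ioc (-π) π) volume :=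
      fun p => ((hcont p).intervalIntegrable (-π) π).1
    have hsum : Summable (fun p : ℕ × ℕ => ∫ θ in Set.Ioc (-π : ℝ) π, ‖Fterm a b p θ‖) := by
      have heq : (fun p : ℕ × ℕ => ∫ θ in Set.Ioc (-π : ℝ) π, ‖Fterm a b p θ‖)
          = fun p => (2 * π) * (‖a‖ ^ p.1 / p.1.factorial *
            (‖a‖ ^ p.2 * ‖Complex.Gamma b‖ / ‖Complex.Gamma (b + p.2)‖)) := by
        funext p
        simp only [hnorm p]
        rw [setIntegral_const, measureReal_def, Real.volume_Ioc, sub_neg_eq_add,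
          ENNReal.toReal_ofReal (by linarith [Real.pi_pos])]
        rw [smul_eq_mul]
        ring
      rw [heq]
      apply Summable.mul_left
      apply Summable.mul_of_nonneg
        (f := fun m : ℕ => ‖a‖ ^ m / (m.factorial : ℝ))
        (g := fun n : ℕ => ‖a‖ ^ n * ‖Complex.Gamma b‖ / ‖Complex.Gamma (b + (n : ℂ))‖)
      · exact (summable_exp_norm a).congr fun m => by
          rw [norm_div, norm_pow]
          norm_num
      · exact (summable_kummer_norm hΓ hb0 ha).congr fun n => by
          rw [norm_div, norm_mul, norm_pow]
      · intro m
        positivity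
      · intro n
        positivity
    have hswap : (∫ θ in Set.Ioc (-π : ℝ) π, ∑' p : ℕ × ℕ, Fterm a b p θ)
        = ∑' p : ℕ × ℕ, ∫ θ in Set.Ioc (-π : ℝ) π, Fterm a b p θ :=
      (integral_tsum_of_summable_integral_norm hintg hsum).symm
    have hterm : ∀ p : ℕ × ℕ, (∫ θ in Set.Ioc (-π : ℝ) π, Fterm a b p θ)
        = a ^ (p.1 + p.2) * Complex.Gamma b /
            ((p.1.factorial : ℂ) * Complex.Gamma (b + p.2)) *
          (if p.1 = p.2 then (2 * π : ℂ) else 0) := by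
      intro p
      simp only [Fterm_eq]
      rw [MeasureTheory.integral_const_mul, integral_exp_I_int]
      rcases eq_or_ne p.1 p.2 with hp | hp
      · rw [if_pos (by omega : ((p.2 : ℤ) - (p.1 : ℤ) : ℤ) = 0), if_pos hp]
      · rw [if_neg (by omega : ¬((p.2 : ℤ) - (p.1 : ℤ) : ℤ) = 0), if_neg hp]
    -- diagonal sum
    have hinj : Function.Injective (fun k : ℕ => ((k, k) : ℕ × ℕ)) := by
      intro x y h
      simpa using congrArg Prod.fst h
    have hzero : ∀ p : ℕ × ℕ, p ∉ Set.range (fun k : ℕ => ((k, k) : ℕ × ℕ)) →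
        (a ^ (p.1 + p.2) * Complex.Gamma b /
            ((p.1.factorial : ℂ) * Complex.Gamma (b + p.2)) *
          (if p.1 = p.2 then (2 * π : ℂ) else 0)) = 0 := by
      rintro ⟨m, n⟩ hp
      have hmn : m ≠ n := fun h => hp ⟨m, by subst h; rfl⟩
      simp only [if_neg hmn, mul_zero]
    have hdiag : (∑' k : ℕ, (a ^ (k + k) * Complex.Gamma b /
            ((k.factorial : ℂ) * Complex.Gamma (b + (k : ℕ))) *
          (if k = k then (2 * π : ℂ) else 0)))
        = ∑' p : ℕ × ℕ, (a ^ (p.1 + p.2) * Complex.Gamma b /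
            ((p.1.factorial : ℂ) * Complex.Gamma (b + p.2)) *
          (if p.1 = p.2 then (2 * π : ℂ) else 0)) :=
      tsum_eq_tsum_of_hasSum_iff_hasSum fun {x} => hinj.hasSum_iff hzero
    -- assemble
    rw [intervalIntegral.integral_of_le hle]
    rw [show (fun θ : ℝ => Complex.exp (a * Complex.exp (-Complex.I * (θ : ℂ))) *
        kummerM1 b (a * Complex.exp (Complex.I * (θ : ℂ))))
      = fun θ : ℝ => ∑' p : ℕ × ℕ, Fterm a b p θ from funext hpt]
    rw [hswap, tsum_congr hterm, ← hdiag]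
    rw [besselJ, ← tsum_mul_left]
    apply tsum_congr
    intro k
    rw [if_pos rfl]
    have hz2 : (z / 2 : ℂ) ≠ 0 := div_ne_zero hz0 two_ne_zero
    have hcpow : (z / 2 : ℂ) ^ (2 * (k : ℂ) + μ) = (z / 2) ^ (2 * k : ℕ) * (z / 2) ^ μ := by
      rw [show (2 * (k : ℂ) + μ) = ((2 * k : ℕ) : ℂ) + μ by push_cast; ring,
        Complex.cpow_add _ _ hz2, Complex.cpow_natCast]
    have hapow : a ^ (k + k) = (-1 : ℂ) ^ k * (z / 2) ^ (2 * k : ℕ) := by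
      have h2 : a ^ 2 = -((z / 2) ^ 2) := by
        rw [ha_def]
        rw [show Complex.I * z / 2 = Complex.I * (z / 2) by ring]
        rw [mul_pow, Complex.I_sq]
        ring
      calc a ^ (k + k) = (a ^ 2) ^ k := by rw [← pow_mul]; ring_nf
        _ = (-1 : ℂ) ^ k * (z / 2) ^ (2 * k : ℕ) := by
            rw [h2, show -((z/2:ℂ)^2) = (-1) * (z/2)^2 by ring, mul_pow, ← pow_mul]
    have hΓeq : Complex.Gamma (b + (k : ℕ)) = Complex.Gamma (μ + k + 1) := by
      rw [hb_def]
      ring_nf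
    have hΓk : Complex.Gamma (μ + (k : ℂ) + 1) ≠ 0 := by
      rw [← hΓeq, hb_def]
      rw [show (1 + μ + (k : ℂ)) = 1 + μ + k by push_cast; ring]
      exact hΓ k
    have hfk : (k.factorial : ℂ) ≠ 0 := Nat.cast_ne_zero.mpr k.factorial_ne_zero
    rw [hcpow, hapow, hΓeq]
    exact final_alg (2 * (π : ℂ)) (Complex.Gamma b) ((k.factorial : ℂ) * Complex.Gamma (μ + k + 1))
      ((-1) ^ k) ((z / 2) ^ (2 * k : ℕ)) ((z / 2) ^ μ)
      (mul_ne_zero two_ne_zero hπC) hΓb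
end
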